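/- Let a_n = Σ_{s=1}^{n-1} 2^s · binom(n-1, s)². Then limsup_{n→∞} a_n^{1/n} ≥ 3 + 2√2. (In fact, combined with the upper bound Σ_{l=0}^n N(n,l) ≤ (3+2√2)^n, the limit of a_n^{1/n} equals 3 + 2√2.) -/

import Mathlib

open Filter

private lemma aux_2n_le_5pow : ∀ k : ℕ, (2 * ((k : ℝ) + 2)) ≤ 5 ^ (k + 1) := by
  intro k
  induction k with
  | zero => norm_num
  | succ k ih =>
    have : (5:ℝ) ^ (k + 2) = 5 * 5 ^ (k+1) := by ring
    rw [this]
    push_cast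
    push_cast at ih
    nlinarith [pow_nonneg (by norm_num : (0:ℝ) ≤ 5) (k+1)]

theorem limsup_lower_bound
    (a : ℕ → ℕ)
    (ha : ∀ n, a n = ∑ s ∈ Finset.Icc 1 (n - 1), 2 ^ s * ((n - 1).choose s) ^ 2) :
    3 + 2 * Real.sqrt 2 ≤
      Filter.limsup (fun n : ℕ => (a n : ℝ) ^ (1 / (n : ℝ))) Filter.atTop ∧
    Filter.Tendsto (fun n : ℕ => (a n : ℝ) ^ (1 / (n : ℝ))) Filter.atTop
      (nhds (3 + 2 * Real.sqrt 2)) := by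
  have hr2 : Real.sqrt 2 ^ 2 = 2 := Real.sq_sqrt (by norm_num)
  have hr0 : (0:ℝ) ≤ Real.sqrt 2 := Real.sqrt_nonneg 2
  have hr1 : (1:ℝ) ≤ Real.sqrt 2 := by nlinarith
  set c : ℝ := 3 + 2 * Real.sqrt 2 with hc_def
  have hc5 : (5:ℝ) ≤ c := by simp only [hc_def]; linarith
  have hc1 : (1:ℝ) ≤ c := by linarith
  have hc0 : (0:ℝ) < c := by linarith
  have hcsq : (Real.sqrt 2 + 1) ^ 2 = c := by
    have : (Real.sqrt 2 + 1)^2 = Real.sqrt 2 ^ 2 + 2 * Real.sqrt 2 + 1 := by ring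
    rw [this, hr2]; simp only [hc_def]; ring
  -- the weight function
  set y : ℕ → ℕ → ℝ := fun m s => (Real.sqrt 2) ^ s * ((m.choose s : ℕ) : ℝ) with hy
  have hterm : ∀ m s : ℕ, (y m s) ^ 2 = 2 ^ s * ((m.choose s : ℕ) : ℝ) ^ 2 := by
    intro m s
    have h : (Real.sqrt 2 ^ s) ^ 2 = 2 ^ s := by
      rw [← pow_mul, mul_comm s 2, pow_mul, hr2]
    simp only [hy, mul_pow, h]
  have hsum : ∀ m : ℕ, ∑ s ∈ Finset.range (m+1), y m s = (Real.sqrt 2 + 1) ^ m := by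
    intro m
    rw [add_pow]
    simp [hy]
  have hcast : ∀ n : ℕ, (a n : ℝ) = ∑ s ∈ Finset.Icc 1 (n-1), (y (n-1) s) ^ 2 := by
    intro n
    rw [ha n]
    push_cast
    exact Finset.sum_congr rfl fun s _ => (hterm _ s).symm
  -- upper bound
  have hub : ∀ n : ℕ, (a n : ℝ) ≤ c ^ n := by
    intro n
    set m := n - 1 with hm
    have h1 : (a n : ℝ) ≤ ∑ s ∈ Finset.range (m+1), (y m s) ^ 2 := by
      rw [hcast]
      apply Finset.sum_le_sum_of_subset_of_nonneg
      · intro x hx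
        simp only [Finset.mem_Icc] at hx
        simp only [Finset.mem_range]
        omega
      · intros; positivity
    have h2 : ∑ s ∈ Finset.range (m+1), (y m s) ^ 2
        ≤ (∑ s ∈ Finset.range (m+1), y m s) ^ 2 :=
      Finset.sum_sq_le_sq_sum_of_nonneg (fun i _ => by simp only [hy]; positivity)
    rw [hsum m] at h2
    have h3 : ((Real.sqrt 2 + 1) ^ m) ^ 2 = c ^ m := by
      rw [← pow_mul, mul_comm m 2, pow_mul, hcsq]
    have h4 : c ^ m ≤ c ^ n := pow_le_pow_right₀ hc1 (Nat.sub_le n 1)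
    linarith
  -- lower bound
  have hlb : ∀ n : ℕ, 1 ≤ n → c ^ (n-1) ≤ (n:ℝ) * ((a n : ℝ) + 1) := by
    intro n hn
    set m := n - 1 with hm
    have hins : Finset.range (m+1) = insert 0 (Finset.Icc 1 m) := by
      ext x; simp only [Finset.mem_range, Finset.mem_insert, Finset.mem_Icc]; omega
    have hsplit : ∑ s ∈ Finset.range (m+1), (y m s) ^ 2 = 1 + (a n : ℝ) := by
      rw [hins, Finset.sum_insert (by simp)]
      have h0 : (y m 0) ^ 2 = 1 := by simp [hy]
      rw [h0, hcast n]
    have hCS := sq_sum_le_card_mul_sum_sq (s := Finset.range (m+1)) (f := y m)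
    rw [hsum m, hsplit, Finset.card_range] at hCS
    have h3 : ((Real.sqrt 2 + 1) ^ m) ^ 2 = c ^ m := by
      rw [← pow_mul, mul_comm m 2, pow_mul, hcsq]
    rw [h3] at hCS
    have hmn : ((m:ℕ) + 1 : ℝ) = (n : ℝ) := by
      have : m + 1 = n := by omega
      exact_mod_cast congrArg (Nat.cast : ℕ → ℝ) this
    calc c ^ m ≤ ((m:ℕ) + 1 : ℝ) * (1 + (a n : ℝ)) := by exact_mod_cast hCS
      _ = (n:ℝ) * ((a n : ℝ) + 1) := by rw [hmn]; ring
  set f : ℕ → ℝ := fun n => (a n : ℝ) ^ (1 / (n:ℝ)) with hf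
  set g : ℕ → ℝ := fun n => (c ^ (n-1) / (2 * (n:ℝ))) ^ (1 / (n:ℝ)) with hg
  -- f n ≤ c eventually
  have hfle : ∀ᶠ n in atTop, f n ≤ c := by
    filter_upwards [eventually_ge_atTop 1] with n hn
    have hn0 : (0:ℝ) < (n:ℝ) := by exact_mod_cast hn
    have h1 : f n ≤ (c ^ n) ^ (1 / (n:ℝ)) :=
      Real.rpow_le_rpow (by positivity) (hub n) (by positivity)
    have h2 : (c ^ n) ^ (1 / (n:ℝ)) = c := by
      rw [← Real.rpow_natCast c n, ← Real.rpow_mul hc0.le]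
      rw [mul_one_div, div_self hn0.ne', Real.rpow_one]
    rw [h2] at h1; exact h1
  -- g n ≤ f n eventually
  have hgle : ∀ᶠ n in atTop, g n ≤ f n := by
    filter_upwards [eventually_ge_atTop 2] with n hn
    have hn0 : (0:ℝ) < (n:ℝ) := by positivity
    obtain ⟨k, rfl⟩ : ∃ k, n = k + 2 := ⟨n - 2, by omega⟩
    have h2n : (2 * ((k+2:ℕ) : ℝ)) ≤ c ^ ((k+2) - 1) := by
      have h5 : (2 * ((k:ℝ) + 2)) ≤ 5 ^ (k + 1) := aux_2n_le_5pow k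
      have h5c : (5:ℝ) ^ (k+1) ≤ c ^ (k+1) := pow_le_pow_left₀ (by norm_num) hc5 _
      have : (k+2) - 1 = k + 1 := by omega
      rw [this]
      push_cast
      linarith
    set n := k + 2 with hn_def
    have hlbn := hlb n (by omega)
    have hnn0 : (0:ℝ) < (n:ℝ) := by positivity
    have hkey : c ^ (n-1) / (2 * (n:ℝ)) ≤ (a n : ℝ) := by
      rw [div_le_iff₀ (by positivity)]
      nlinarith [hlbn, h2n]
    exact Real.rpow_le_rpow (by positivity) hkey (by positivity)
  -- g tends to c
  have hgt : Tendsto g atTop (nhds c) := by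
    have hlog2n : Tendsto (fun n : ℕ => Real.log (2 * (n:ℝ)) / (n:ℝ)) atTop (nhds 0) := by
      have h1 : Tendsto (fun x : ℝ => Real.log x / x) atTop (nhds 0) := by
        have := Real.tendsto_pow_log_div_mul_add_atTop 1 0 1 one_ne_zero
        simpa using this
      have h2 : Tendsto (fun n : ℕ => 2 * (n:ℝ)) atTop atTop :=
        (tendsto_natCast_atTop_atTop).const_mul_atTop (by norm_num)
      have h3 := h1.comp h2
      have h4 : Tendsto (fun n : ℕ => Real.log (2 * (n:ℝ)) / (2 * (n:ℝ))) atTop (nhds 0) := h3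
      have h5 : Tendsto (fun n : ℕ => 2 * (Real.log (2 * (n:ℝ)) / (2 * (n:ℝ)))) atTop
          (nhds (2 * 0)) := h4.const_mul 2
      rw [mul_zero] at h5
      apply h5.congr'
      filter_upwards [eventually_ge_atTop 1] with n hn
      have : (n:ℝ) ≠ 0 := by positivity
      field_simp
    have hfrac : Tendsto (fun n : ℕ => (((n:ℝ) - 1) / (n:ℝ)) * Real.log c) atTop
        (nhds (Real.log c)) := by
      have h1 : Tendsto (fun n : ℕ => ((n:ℝ) - 1) / (n:ℝ)) atTop (nhds 1) := by
        have h2 := tendsto_one_div_atTop_nhds_zero_nat (𝕜 := ℝ)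
        have h3 : Tendsto (fun n : ℕ => 1 - 1/(n:ℝ)) atTop (nhds (1 - 0)) :=
          tendsto_const_nhds.sub h2
        rw [sub_zero] at h3
        apply h3.congr'
        filter_upwards [eventually_ge_atTop 1] with n hn
        have : (n:ℝ) ≠ 0 := by positivity
        field_simp
      have := h1.mul_const (Real.log c)
      rwa [one_mul] at this
    have hexp : Tendsto (fun n : ℕ => (((n:ℝ) - 1) / (n:ℝ)) * Real.log c
        - Real.log (2 * (n:ℝ)) / (n:ℝ)) atTop (nhds (Real.log c)) := by
      have := hfrac.sub hlog2n
      rwa [sub_zero] at this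
    have hcomp : Tendsto (fun n : ℕ => Real.exp ((((n:ℝ) - 1) / (n:ℝ)) * Real.log c
        - Real.log (2 * (n:ℝ)) / (n:ℝ))) atTop (nhds (Real.exp (Real.log c))) :=
      (Real.continuous_exp.tendsto _).comp hexp
    rw [Real.exp_log hc0] at hcomp
    apply hcomp.congr'
    filter_upwards [eventually_ge_atTop 1] with n hn
    have hn0 : (0:ℝ) < (n:ℝ) := by positivity
    have hpos : (0:ℝ) < c ^ (n-1) / (2 * (n:ℝ)) := by positivity
    rw [hg]
    simp only
    rw [Real.rpow_def_of_pos hpos, Real.log_div (by positivity) (by positivity),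
      Real.log_pow]
    have hm : (((n - 1 : ℕ)) : ℝ) = (n:ℝ) - 1 := by
      have : (1:ℕ) ≤ n := hn
      push_cast [Nat.cast_sub this]
      ring
    rw [hm]
    field_simp
  -- squeeze
  have htend : Tendsto f atTop (nhds c) :=
    tendsto_of_tendsto_of_tendsto_of_le_of_le' hgt tendsto_const_nhds hgle hfle
  refine ⟨?_, htend⟩
  rw [htend.limsup_eq]
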